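/- arXiv:2507.04712 — 3 statements merged into one kernel-verified Lean document; each statement's English description precedes it below -/
import Mathlib

section
/- Let T ≥ 1, and for k ∈ {0,…,T−1} let A_k be invertible n×n real matrices, B_k be n×m real matrices, R_k and Σρ_k be m×m symmetric positive definite matrices, and ε > 0. Define Π_T = F with F n×n symmetric positive definite, and Π_k = A_kᵀ Π_{k+1} A_k − A_kᵀ Π_{k+1} B_k (R_k + B_kᵀ Π_{k+1} B_k + ε Σρ_k⁻¹)⁻¹ B_kᵀ Π_{k+1} A_k for k = T−1,…,0. Then Π_k is invertible (indeed symmetric positive definite) for every k ∈ {0,…,T}. -/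
open Matrix

lemma posDef_smul' {m : ℕ} {M : Matrix (Fin m) (Fin m) ℝ} (hM : M.PosDef) {c : ℝ} (hc : 0 < c) :
    (c • M).PosDef := by
  refine Matrix.PosDef.of_dotProduct_mulVec_pos ?_ (fun x hx => ?_)
  · unfold Matrix.IsHermitian
    rw [conjTranspose_smul]
    simp [← conjTranspose_eq_transpose_of_trivial, hM.1.eq]
  · have := hM.dotProduct_mulVec_pos hx
    rw [Matrix.smul_mulVec, dotProduct_smul]
    exact mul_pos hc this

lemma posDef_conj' {n : ℕ} {M : Matrix (Fin n) (Fin n) ℝ} (hM : M.PosDef)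
    {C : Matrix (Fin n) (Fin n) ℝ} (hC : IsUnit C) : (Cᵀ * M * C).PosDef := by
  refine Matrix.PosDef.of_dotProduct_mulVec_pos ?_ (fun x hx => ?_)
  · have := hM.1.eq
    unfold Matrix.IsHermitian at this ⊢
    simp only [conjTranspose_mul, ← conjTranspose_eq_transpose_of_trivial]
    rw [conjTranspose_conjTranspose, this, Matrix.mul_assoc]
  · have hCx : C *ᵥ x ≠ 0 := by
      intro h
      apply hx
      have := congrArg (fun y => C⁻¹ *ᵥ y) h
      simpa [Matrix.mulVec_mulVec,
        Matrix.nonsing_inv_mul C ((Matrix.isUnit_iff_isUnit_det C).mp hC)] using this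
    have := hM.dotProduct_mulVec_pos hCx
    have hst : star x ⬝ᵥ (Cᵀ * M * C) *ᵥ x = star (C *ᵥ x) ⬝ᵥ M *ᵥ (C *ᵥ x) := by
      rw [← Matrix.mulVec_mulVec, ← Matrix.mulVec_mulVec]
      rw [Matrix.dotProduct_mulVec (star x) Cᵀ, Matrix.vecMul_transpose]
      simp [star_mulVec, Matrix.dotProduct_mulVec, ← conjTranspose_eq_transpose_of_trivial]
    rw [hst]
    exact this

lemma riccati_step {n m : ℕ} {P : Matrix (Fin n) (Fin n) ℝ} (hP : P.PosDef)
    {C : Matrix (Fin n) (Fin n) ℝ} (hC : IsUnit C)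
    {B : Matrix (Fin n) (Fin m) ℝ} {S : Matrix (Fin m) (Fin m) ℝ} (hS : S.PosDef) :
    (Cᵀ * P * C - Cᵀ * P * B * (S + Bᵀ * P * B)⁻¹ * Bᵀ * P * C).PosDef := by
  have hBPB : (Bᵀ * P * B).PosSemidef := by
    have := hP.posSemidef.conjTranspose_mul_mul_same B
    rwa [conjTranspose_eq_transpose_of_trivial] at this
  have hM : (S + Bᵀ * P * B).PosDef := hS.add_posSemidef hBPB
  have hBSB : (B * S⁻¹ * Bᵀ).PosSemidef := by
    have := hS.inv.posSemidef.mul_mul_conjTranspose_same B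
    rwa [conjTranspose_eq_transpose_of_trivial] at this
  have hX : (P⁻¹ + B * S⁻¹ * Bᵀ).PosDef := hP.inv.add_posSemidef hBSB
  have hPinvinv : P⁻¹⁻¹ = P :=
    Matrix.nonsing_inv_nonsing_inv P ((Matrix.isUnit_iff_isUnit_det P).mp hP.isUnit)
  have hSinvinv : S⁻¹⁻¹ = S :=
    Matrix.nonsing_inv_nonsing_inv S ((Matrix.isUnit_iff_isUnit_det S).mp hS.isUnit)
  have key : (P⁻¹ + B * S⁻¹ * Bᵀ)⁻¹ = P - P * B * (S + Bᵀ * P * B)⁻¹ * Bᵀ * P := by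
    have := Matrix.add_mul_mul_inv_eq_sub P⁻¹ B S⁻¹ Bᵀ hP.inv.isUnit hS.inv.isUnit
      (by rw [hSinvinv, hPinvinv]; exact hM.isUnit)
    rw [hSinvinv, hPinvinv] at this
    exact this
  have hgoal : Cᵀ * P * C - Cᵀ * P * B * (S + Bᵀ * P * B)⁻¹ * Bᵀ * P * C
      = Cᵀ * (P⁻¹ + B * S⁻¹ * Bᵀ)⁻¹ * C := by
    rw [key]
    simp only [Matrix.mul_sub, Matrix.sub_mul, Matrix.mul_assoc]
  rw [hgoal]
  exact posDef_conj' hX.inv hC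

/-- When additionally every `A k` is invertible, the solution of the backward modified
Riccati recursion is positive definite, hence invertible, at every time step. -/
theorem riccati_posDef_invertible
    (n m T : ℕ) (hT : 1 ≤ T) (ε : ℝ) (hε : 0 < ε)
    (A : ℕ → Matrix (Fin n) (Fin n) ℝ) (B : ℕ → Matrix (Fin n) (Fin m) ℝ)
    (R Sρ : ℕ → Matrix (Fin m) (Fin m) ℝ)
    (hA : ∀ k < T, IsUnit (A k))
    (hR : ∀ k < T, (R k).PosDef) (hSρ : ∀ k < T, (Sρ k).PosDef)
    (F : Matrix (Fin n) (Fin n) ℝ) (hF : F.PosDef)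
    (Pm : ℕ → Matrix (Fin n) (Fin n) ℝ)
    (hPmT : Pm T = F)
    (hrec : ∀ k < T, Pm k =
      (A k)ᵀ * Pm (k + 1) * A k -
        (A k)ᵀ * Pm (k + 1) * B k *
          (R k + (B k)ᵀ * Pm (k + 1) * B k + ε • (Sρ k)⁻¹)⁻¹ *
          (B k)ᵀ * Pm (k + 1) * A k) :
    ∀ k ≤ T, IsUnit (Pm k) ∧ (Pm k).PosDef := by
  have key : ∀ d k, k + d = T → (Pm k).PosDef := by
    intro d
    induction d with
    | zero => intro k hk; simp only [Nat.add_zero] at hk; rw [hk, hPmT]; exact hF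
    | succ d ih =>
      intro k hk
      have hkT : k < T := by omega
      have hP : (Pm (k + 1)).PosDef := ih (k + 1) (by omega)
      have hS : (R k + ε • (Sρ k)⁻¹).PosDef :=
        (hR k hkT).add (posDef_smul' (hSρ k hkT).inv hε)
      have hre : R k + (B k)ᵀ * Pm (k + 1) * B k + ε • (Sρ k)⁻¹
          = (R k + ε • (Sρ k)⁻¹) + (B k)ᵀ * Pm (k + 1) * B k := by abel
      rw [hrec k hkT, hre]
      exact riccati_step hP (hA k hkT) hS
  intro k hk
  have hpd : (Pm k).PosDef := key (T - k) k (by omega)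
  exact ⟨hpd.isUnit, hpd⟩
end

section
/- Let μ be a probability measure on a measurable space X, let κ be a Markov kernel from X to a standard Borel measurable space U, and let ρ* := μ.bind κ be the marginal of κ under μ (i.e., ρ*(S) = ∫ κ(x)(S) dμ(x)). Then for every probability measure ρ on U, ∫ D_KL(κ(x) ‖ ρ) dμ(x) = ∫ D_KL(κ(x) ‖ ρ*) dμ(x) + D_KL(ρ* ‖ ρ) (as an identity in [0,∞]). In particular, ρ* minimizes ρ ↦ ∫ D_KL(κ(x) ‖ ρ) dμ(x) over all probability measures ρ on U. -/
open MeasureTheory ProbabilityTheory ENNReal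
open scoped Classical

/-- Kullback–Leibler divergence, valued in `[0, ∞]`: equal to `∫ log(dp/dq) dp` when
`p ≪ q` (and this integral is well defined), and `+∞` otherwise. -/
noncomputable def klDiv {α : Type*} [MeasurableSpace α] (p q : Measure α) : ℝ≥0∞ :=
  if p ≪ q ∧ Integrable (llr p q) p then ENNReal.ofReal (∫ x, llr p q x ∂p) else ⊤

/-- The convex function `a ↦ a log a - a + 1`, nonnegative on `[0, ∞)`. -/
noncomputable def hfun (a : ℝ) : ℝ := a * Real.log a - a + 1

lemma hfun_zero : hfun 0 = 1 := by simp [hfun]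

lemma hfun_nonneg {a : ℝ} (ha : 0 ≤ a) : 0 ≤ hfun a := by
  rcases eq_or_lt_of_le ha with h | h
  · simp [hfun, ← h]
  · have h2 : Real.log a⁻¹ ≤ a⁻¹ - 1 := Real.log_le_sub_one_of_pos (by positivity)
    rw [Real.log_inv] at h2
    have h3 : a * (1 - a⁻¹) ≤ a * Real.log a :=
      mul_le_mul_of_nonneg_left (by linarith) h.le
    have ha1 : a * a⁻¹ = 1 := mul_inv_cancel₀ h.ne'
    unfold hfun; nlinarith
lemma measurable_hfun : Measurable hfun :=
  ((measurable_id.mul Real.measurable_log).sub measurable_id).add measurable_const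

lemma hfun_mul {a b : ℝ} (ha : 0 ≤ a) (hb : 0 ≤ b) :
    hfun (a * b) = b * hfun a + (b * Real.log b) * a + (1 - b) := by
  rcases eq_or_lt_of_le ha with h | h
  · simp [hfun, ← h]
  rcases eq_or_lt_of_le hb with h' | h'
  · simp [hfun, ← h']
  · unfold hfun; rw [Real.log_mul h.ne' h'.ne']; ring

lemma lintegral_eq_top_of_ae_top {α : Type*} [MeasurableSpace α] {μ : Measure α} {f : α → ℝ≥0∞}
    {S : Set α} (hS : MeasurableSet S) (hμS : μ S ≠ 0)
    (hf : ∀ᵐ x ∂μ, x ∈ S → f x = ⊤) : ∫⁻ x, f x ∂μ = ⊤ := by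
  refine top_le_iff.mp ?_
  calc (⊤ : ℝ≥0∞) = ⊤ * μ S := (ENNReal.top_mul hμS).symm
    _ = ∫⁻ _ in S, ⊤ ∂μ := by rw [setLIntegral_const]
    _ = ∫⁻ x in S, f x ∂μ := lintegral_congr_ae
        ((ae_restrict_iff' hS).mpr (hf.mono fun x hx hxS => (hx hxS).symm))
    _ ≤ ∫⁻ x, f x ∂μ := setLIntegral_le_lintegral _ _

/-- KEY: for `p ≪ q` between probability measures, `klDiv p q` equals the `ℝ≥0∞`-valued
integral of `hfun` of the Radon–Nikodym derivative. -/
lemma klDiv_eq_lintegral_hfun {α : Type*} [MeasurableSpace α] {p q : Measure α}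
    [IsProbabilityMeasure p] [IsProbabilityMeasure q] (hpq : p ≪ q) :
    klDiv p q = ∫⁻ u, ENNReal.ofReal (hfun (p.rnDeriv q u).toReal) ∂q := by
  set f : α → ℝ := fun u => (p.rnDeriv q u).toReal with hfdef
  have hfm : Measurable f := (Measure.measurable_rnDeriv p q).ennreal_toReal
  have hf0 : ∀ u, 0 ≤ f u := fun u => ENNReal.toReal_nonneg
  have hint_iff : Integrable (llr p q) p ↔ Integrable (fun u => f u * Real.log (f u)) q := by
    rw [← integrable_rnDeriv_smul_iff hpq]
    simp only [llr, smul_eq_mul]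
    rfl
  have hfint : Integrable f q := Measure.integrable_toReal_rnDeriv
  have hfmean : ∫ u, f u ∂q = 1 := by
    rw [hfdef, Measure.integral_toReal_rnDeriv hpq]; simp
  by_cases hint : Integrable (llr p q) p
  · rw [klDiv, if_pos ⟨hpq, hint⟩]
    have h1 : ∫ x, llr p q x ∂p = ∫ u, f u * Real.log (f u) ∂q := by
      rw [← integral_rnDeriv_smul hpq]
      simp only [llr, smul_eq_mul]
      rfl
    have hmul : Integrable (fun u => f u * Real.log (f u)) q := hint_iff.mp hint
    have hsub : Integrable (fun u => f u * Real.log (f u) - f u) q := hmul.sub hfint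
    have h2 : Integrable (fun u => hfun (f u)) q := by
      have h2' : Integrable (fun u => f u * Real.log (f u) - f u + 1) q :=
        hsub.add (integrable_const 1)
      simpa [hfun] using h2'
    have h3 : ∫ u, hfun (f u) ∂q = ∫ u, f u * Real.log (f u) ∂q := by
      simp only [hfun]
      rw [integral_add hsub (integrable_const 1), integral_sub hmul hfint, hfmean,
        integral_const]
      simp
    rw [h1, ← h3,
      ofReal_integral_eq_lintegral_ofReal h2 (Filter.Eventually.of_forall fun u => hfun_nonneg (hf0 u))]
  · rw [klDiv, if_neg (by tauto)]
    symm
    by_contra hne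
    have h4 : Integrable (fun u => hfun (f u)) q := by
      have h5 := integrable_toReal_of_lintegral_ne_top
        ((measurable_hfun.comp hfm).ennreal_ofReal.aemeasurable) hne
      refine h5.congr (Filter.Eventually.of_forall fun u => ?_)
      exact ENNReal.toReal_ofReal (hfun_nonneg (hf0 u))
    refine hint (hint_iff.mpr ?_)
    have h6 : Integrable (fun u => hfun (f u) + f u) q := h4.add hfint
    have h7 : Integrable (fun u => hfun (f u) + f u - 1) q := h6.sub (integrable_const 1)
    refine h7.congr (Filter.Eventually.of_forall fun u => ?_)
    simp [hfun]; ring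
theorem klDiv_decomp_aux {X U : Type*} [MeasurableSpace X] [MeasurableSpace U]
    [StandardBorelSpace U]
    (μ : Measure X) [IsProbabilityMeasure μ] (κ : Kernel X U) [IsMarkovKernel κ]
    (ρ : Measure U) [IsProbabilityMeasure ρ] :
    ∫⁻ x, klDiv (κ x) ρ ∂μ = ∫⁻ x, klDiv (κ x) (μ.bind κ) ∂μ + klDiv (μ.bind κ) ρ := by
  have hρs_prob : IsProbabilityMeasure (μ.bind κ) :=
    ⟨by rw [Measure.bind_apply MeasurableSet.univ κ.measurable.aemeasurable]; simp⟩
  set ρs := μ.bind κ with hρs_def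
  have hbind : ∀ {T : Set U}, MeasurableSet T → ρs T = ∫⁻ x, κ x T ∂μ :=
    fun hT => Measure.bind_apply hT κ.measurable.aemeasurable
  by_cases hac : ρs ≪ ρ
  swap
  · -- Case I : `ρs` not absolutely continuous w.r.t. `ρ`; both sides are `⊤`.
    have hC : klDiv ρs ρ = ⊤ := by rw [klDiv, if_neg (by tauto)]
    rw [hC]
    simp only [add_top]
    have hex : ¬ ∀ ⦃s : Set U⦄, ρ s = 0 → ρs s = 0 := fun h => hac h
    push_neg at hex
    obtain ⟨T, hT0, hTs⟩ := hex
    set T' := toMeasurable ρ T with hT'def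
    have hT'm : MeasurableSet T' := measurableSet_toMeasurable ρ T
    have hρT' : ρ T' = 0 := by rw [hT'def, measure_toMeasurable]; exact hT0
    have hρsT' : ρs T' ≠ 0 := fun h => hTs (measure_mono_null (subset_toMeasurable ρ T) h)
    have hSm : MeasurableSet {x | κ x T' ≠ 0} :=
      (κ.measurable_coe hT'm) (measurableSet_singleton 0) |>.compl
    have hμS : μ {x | κ x T' ≠ 0} ≠ 0 := by
      intro h
      apply hρsT'
      rw [hbind hT'm, lintegral_eq_zero_iff (κ.measurable_coe hT'm)]
      rw [Filter.EventuallyEq, ae_iff]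
      simpa using h
    refine lintegral_eq_top_of_ae_top hSm hμS (Filter.Eventually.of_forall fun x hx => ?_)
    rw [klDiv, if_neg]
    rintro ⟨h1, -⟩
    exact hx (h1 hρT')
  -- Case II : `ρs ≪ ρ`.
  set g : U → ℝ≥0∞ := ρs.rnDeriv ρ with hgdef
  have hg_meas : Measurable g := Measure.measurable_rnDeriv _ _
  have hwd : ρ.withDensity g = ρs := Measure.withDensity_rnDeriv_eq _ _ hac
  have htrans : ∀ {P : U → Prop}, (∀ᵐ u ∂ρs, P u) →
      ∀ᵐ u ∂ρ, P u ∨ g u = 0 := by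
    intro P hP
    rw [← hwd] at hP
    set D' := toMeasurable (ρ.withDensity g) {u | ¬ P u} with hD'def
    have hD'm : MeasurableSet D' := measurableSet_toMeasurable _ _
    have h0 : ∫⁻ u in D', g u ∂ρ = 0 := by
      rw [← withDensity_apply _ hD'm, hD'def, measure_toMeasurable]
      exact ae_iff.mp hP
    have h1 : (fun u => g u) =ᵐ[ρ.restrict D'] 0 :=
      (lintegral_eq_zero_iff hg_meas).mp h0
    have h2 : ∀ᵐ u ∂ρ, u ∈ D' → g u = 0 := (ae_restrict_iff' hD'm).mp h1
    filter_upwards [h2] with u hu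
    by_cases hmem : u ∈ D'
    · exact Or.inr (hu hmem)
    · exact Or.inl (by_contra fun hPu => hmem (subset_toMeasurable _ _ hPu))
  have hZm : MeasurableSet {u | g u = 0} := hg_meas (measurableSet_singleton 0)
  have hZ : ∀ᵐ x ∂μ, κ x {u | g u = 0} = 0 := by
    have hρsZ : ρs {u | g u = 0} = 0 := by
      rw [← hwd, withDensity_apply _ hZm]
      calc ∫⁻ u in {u | g u = 0}, g u ∂ρ
          = ∫⁻ _ in {u | g u = 0}, 0 ∂ρ :=
            setLIntegral_congr_fun hZm (fun u hu => hu)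
        _ = 0 := by simp
    rw [hbind hZm] at hρsZ
    have := (lintegral_eq_zero_iff (κ.measurable_coe hZm)).mp hρsZ
    filter_upwards [this] with x hx using hx
  have hACimp : ∀ᵐ x ∂μ, (κ x ≪ ρ → κ x ≪ ρs) := by
    filter_upwards [hZ] with x hx hxρ
    refine Measure.AbsolutelyContinuous.mk fun N hN hρsN => ?_
    have h0 : ∫⁻ u in N, g u ∂ρ = 0 := by
      rw [← withDensity_apply _ hN, hwd]; exact hρsN
    have h1 : ∀ᵐ u ∂ρ, u ∈ N → g u = 0 :=
      (ae_restrict_iff' hN).mp ((lintegral_eq_zero_iff hg_meas).mp h0)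
    have h2 : ρ (N \ {u | g u = 0}) = 0 := by
      refine measure_mono_null ?_ (ae_iff.mp h1)
      intro u hu
      simp only [Set.mem_setOf_eq, Set.mem_diff] at hu ⊢
      tauto
    have h3 : κ x N ≤ κ x (N ∩ {u | g u = 0}) + κ x (N \ {u | g u = 0}) :=
      measure_le_inter_add_diff _ _ _
    have h4 : κ x (N ∩ {u | g u = 0}) = 0 :=
      measure_mono_null Set.inter_subset_right hx
    have h5 : κ x (N \ {u | g u = 0}) = 0 := hxρ h2
    exact le_antisymm (by rw [h4, h5] at h3; simpa using h3) zero_le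
  by_cases hka : ∀ᵐ x ∂μ, κ x ≪ ρs
  swap
  · -- Case II.a : positive measure of fibers not `≪ ρs`; both `A` and `B` are `⊤`.
    have hSm : MeasurableSet {x | ¬ κ x ≪ ρs} := by
      have h := (Kernel.measurableSet_absolutelyContinuous κ (Kernel.const X ρs)).compl
      have he : {x | κ x ≪ (Kernel.const X ρs) x}ᶜ = {x | ¬ κ x ≪ ρs} := by
        ext x; simp [Kernel.const_apply]
      rwa [he] at h
    have hμS : μ {x | ¬ κ x ≪ ρs} ≠ 0 := by
      intro h
      exact hka (ae_iff.mpr h)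
    have hB : ∫⁻ x, klDiv (κ x) ρs ∂μ = ⊤ :=
      lintegral_eq_top_of_ae_top hSm hμS
        (Filter.Eventually.of_forall fun x hx => by rw [klDiv, if_neg (by tauto)])
    have hA : ∫⁻ x, klDiv (κ x) ρ ∂μ = ⊤ := by
      refine lintegral_eq_top_of_ae_top hSm hμS ?_
      filter_upwards [hACimp] with x hx hxS
      rw [klDiv, if_neg]
      rintro ⟨h1, -⟩
      exact hxS (hx h1)
    rw [hA, hB]
    simp only [top_add]
  -- Case II.b : main computation.
  set f : X → U → ℝ≥0∞ := Kernel.rnDeriv κ (Kernel.const X ρs) with hfdef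
  have hf_meas : Measurable (Function.uncurry f) := Kernel.measurable_rnDeriv _ _
  have hf_meas1 : ∀ x, Measurable (f x) := fun x => hf_meas.comp measurable_prodMk_left
  have hf_meas2 : ∀ u, Measurable fun x => f x u := fun u =>
    hf_meas.comp (measurable_id.prodMk measurable_const)
  have hf_eq : ∀ x, f x =ᵐ[ρs] (κ x).rnDeriv ρs := by
    intro x
    have h := Kernel.rnDeriv_eq_rnDeriv_measure (κ := κ) (η := Kernel.const X ρs) (a := x)
    simpa using h
  have hκx : ∀ᵐ x ∂μ, ρs.withDensity (f x) = κ x := by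
    filter_upwards [hka] with x hx
    rw [withDensity_congr_ae (hf_eq x), Measure.withDensity_rnDeriv_eq _ _ hx]
  have hF_meas : Measurable fun u => ∫⁻ x, f x u ∂μ :=
    Measurable.lintegral_prod_right (f := fun u x => f x u) (hf_meas.comp measurable_swap)
  have hFwd : ρs.withDensity (fun u => ∫⁻ x, f x u ∂μ) = ρs := by
    ext T hT
    rw [withDensity_apply _ hT]
    calc ∫⁻ u in T, ∫⁻ x, f x u ∂μ ∂ρs
        = ∫⁻ x, ∫⁻ u in T, f x u ∂ρs ∂μ :=
          lintegral_lintegral_swap ((hf_meas.comp measurable_swap).aemeasurable)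
      _ = ∫⁻ x, κ x T ∂μ := lintegral_congr_ae (hκx.mono fun x hx => by
          show ∫⁻ u in T, f x u ∂ρs = κ x T
          rw [← hx, withDensity_apply _ hT])
      _ = ρs T := (hbind hT).symm
  have hF1 : (fun u => ∫⁻ x, f x u ∂μ) =ᵐ[ρs] fun _ => 1 := by
    have h1 := Measure.rnDeriv_withDensity ρs hF_meas
    rw [hFwd] at h1
    exact h1.symm.trans (Measure.rnDeriv_self ρs)
  have hC : klDiv ρs ρ = ∫⁻ u, ENNReal.ofReal (hfun (g u).toReal) ∂ρ :=
    klDiv_eq_lintegral_hfun hac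
  have hB : ∫⁻ x, klDiv (κ x) ρs ∂μ
      = ∫⁻ x, ∫⁻ u, g u * ENNReal.ofReal (hfun ((f x u).toReal)) ∂ρ ∂μ := by
    refine lintegral_congr_ae ?_
    filter_upwards [hka] with x hx
    rw [klDiv_eq_lintegral_hfun hx]
    have e1 : ∫⁻ u, ENNReal.ofReal (hfun (((κ x).rnDeriv ρs u).toReal)) ∂ρs
        = ∫⁻ u, ENNReal.ofReal (hfun ((f x u).toReal)) ∂ρs :=
      lintegral_congr_ae ((hf_eq x).mono fun u hu => by simp only [hu])
    rw [e1, ← hwd, lintegral_withDensity_eq_lintegral_mul _ hg_meas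
      (show Measurable fun u => ENNReal.ofReal (hfun ((f x u).toReal)) from
        (measurable_hfun.comp (hf_meas1 x).ennreal_toReal).ennreal_ofReal)]
    exact lintegral_congr fun u => rfl
  have hA : ∫⁻ x, klDiv (κ x) ρ ∂μ
      = ∫⁻ x, ∫⁻ u, ENNReal.ofReal (hfun ((f x u).toReal * (g u).toReal)) ∂ρ ∂μ := by
    refine lintegral_congr_ae ?_
    filter_upwards [hka] with x hx
    rw [klDiv_eq_lintegral_hfun (hx.trans hac)]
    refine lintegral_congr_ae ?_
    have hmul := Measure.rnDeriv_mul_rnDeriv (μ := κ x) (ν := ρs) (κ := ρ) hx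
    have hfx : ∀ᵐ u ∂ρ, f x u = (κ x).rnDeriv ρs u ∨ g u = 0 := htrans (hf_eq x)
    filter_upwards [hmul, hfx] with u h1 h2
    rcases h2 with h2 | h2
    · rw [← h1, Pi.mul_apply, ENNReal.toReal_mul, h2]
    · have h2' : (∂ρs/∂ρ) u = 0 := h2
      rw [← h1, Pi.mul_apply, h2', h2]
      simp
  have hswapA : Measurable fun p : X × U =>
      ENNReal.ofReal (hfun ((f p.1 p.2).toReal * (g p.2).toReal)) :=
    (measurable_hfun.comp ((hf_meas.ennreal_toReal).mul
      ((hg_meas.comp measurable_snd).ennreal_toReal))).ennreal_ofReal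
  have hswapB : Measurable fun p : X × U =>
      g p.2 * ENNReal.ofReal (hfun ((f p.1 p.2).toReal)) :=
    (hg_meas.comp measurable_snd).mul
      (measurable_hfun.comp (hf_meas.ennreal_toReal)).ennreal_ofReal
  have hAs : ∫⁻ x, ∫⁻ u, ENNReal.ofReal (hfun ((f x u).toReal * (g u).toReal)) ∂ρ ∂μ
      = ∫⁻ u, ∫⁻ x, ENNReal.ofReal (hfun ((f x u).toReal * (g u).toReal)) ∂μ ∂ρ :=
    lintegral_lintegral_swap hswapA.aemeasurable
  have hBs : ∫⁻ x, ∫⁻ u, g u * ENNReal.ofReal (hfun ((f x u).toReal)) ∂ρ ∂μ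
      = ∫⁻ u, ∫⁻ x, g u * ENNReal.ofReal (hfun ((f x u).toReal)) ∂μ ∂ρ :=
    lintegral_lintegral_swap hswapB.aemeasurable
  rw [hA, hB, hC, hAs, hBs]
  rw [← lintegral_add_right _ (show Measurable fun u => ENNReal.ofReal (hfun ((g u).toReal)) from
    (measurable_hfun.comp hg_meas.ennreal_toReal).ennreal_ofReal)]
  refine lintegral_congr_ae ?_
  have hgfin : ∀ᵐ u ∂ρ, g u ≠ ⊤ := by
    filter_upwards [Measure.rnDeriv_lt_top ρs ρ] with u hu using hu.ne
  have hFae : ∀ᵐ u ∂ρ, (∫⁻ x, f x u ∂μ) = 1 ∨ g u = 0 :=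
    htrans (P := fun u => (∫⁻ x, f x u ∂μ) = 1) (hF1.mono fun u hu => hu)
  filter_upwards [hgfin, hFae] with u hgu hFu
  rcases eq_or_ne (g u) 0 with hg0 | hg0
  · simp [hg0, hfun_zero]
  · have hFu1 : ∫⁻ x, f x u ∂μ = 1 := hFu.resolve_right hg0
    rw [lintegral_const_mul _ (show Measurable fun x => ENNReal.ofReal (hfun ((f x u).toReal)) from (measurable_hfun.comp ((hf_meas2 u).ennreal_toReal)).ennreal_ofReal)]
    set b := (g u).toReal with hbdef
    have hb_pos : 0 < b := ENNReal.toReal_pos hg0 hgu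
    have hafin : ∀ᵐ x ∂μ, f x u ≠ ⊤ := by
      have h := ae_lt_top (hf_meas2 u) (by rw [hFu1]; exact one_ne_top)
      filter_upwards [h] with x hx using hx.ne
    have hJa : ∫⁻ x, ENNReal.ofReal ((f x u).toReal) ∂μ = 1 := by
      rw [← hFu1]
      refine lintegral_congr_ae ?_
      filter_upwards [hafin] with x hx using ENNReal.ofReal_toReal hx
    by_cases hJ : ∫⁻ x, ENNReal.ofReal (hfun ((f x u).toReal)) ∂μ = ⊤
    · rw [hJ, ENNReal.mul_top hg0, top_add]
      set c := b * |Real.log b| with hcdef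
      have hc : 0 ≤ c := mul_nonneg hb_pos.le (abs_nonneg _)
      have hptle : ∀ x, ENNReal.ofReal (b * hfun ((f x u).toReal))
          ≤ ENNReal.ofReal (hfun ((f x u).toReal * b))
            + ENNReal.ofReal (c * (f x u).toReal + |1 - b|) := by
        intro x
        set a := (f x u).toReal with hadef
        have ha : 0 ≤ a := ENNReal.toReal_nonneg
        have hid : hfun (a * b) = b * hfun a + (b * Real.log b) * a + (1 - b) :=
          hfun_mul ha hb_pos.le
        have hle : b * hfun a ≤ hfun (a * b) + (c * a + |1 - b|) := by
          rw [hid, hcdef]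
          have h1 : (-(b * |Real.log b|)) * a ≤ (b * Real.log b) * a := by
            apply mul_le_mul_of_nonneg_right _ ha
            nlinarith [neg_abs_le (Real.log b)]
          have h2 : -(1 - b) ≤ |1 - b| := neg_le_abs (1 - b)
          nlinarith [h1, h2]
        calc ENNReal.ofReal (b * hfun a)
            ≤ ENNReal.ofReal (hfun (a * b) + (c * a + |1 - b|)) :=
              ENNReal.ofReal_le_ofReal hle
          _ = _ := ENNReal.ofReal_add (hfun_nonneg (mul_nonneg ha hb_pos.le))
              (add_nonneg (mul_nonneg hc ha) (abs_nonneg _))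
      have hfin2 : ∫⁻ x, ENNReal.ofReal (c * (f x u).toReal + |1 - b|) ∂μ ≠ ⊤ := by
        have hle2 : ∫⁻ x, ENNReal.ofReal (c * (f x u).toReal + |1 - b|) ∂μ
            ≤ ∫⁻ x, (ENNReal.ofReal c * ENNReal.ofReal ((f x u).toReal)
              + ENNReal.ofReal |1 - b|) ∂μ := by
          refine lintegral_mono fun x => ?_
          refine le_trans ENNReal.ofReal_add_le ?_
          rw [ENNReal.ofReal_mul hc]
        refine ne_top_of_le_ne_top ?_ hle2
        rw [lintegral_add_right _ measurable_const,
          lintegral_const_mul _ ((hf_meas2 u).ennreal_toReal).ennreal_ofReal, hJa,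
          lintegral_const, measure_univ, mul_one, mul_one]
        exact ENNReal.add_ne_top.mpr ⟨ENNReal.ofReal_ne_top, ENNReal.ofReal_ne_top⟩
      have hlhs : (⊤ : ℝ≥0∞) ≤ ∫⁻ x, ENNReal.ofReal (hfun ((f x u).toReal * b)) ∂μ
          + ∫⁻ x, ENNReal.ofReal (c * (f x u).toReal + |1 - b|) ∂μ := by
        calc (⊤ : ℝ≥0∞)
            = ENNReal.ofReal b * ∫⁻ x, ENNReal.ofReal (hfun ((f x u).toReal)) ∂μ := by
              rw [hJ, ENNReal.mul_top (ENNReal.ofReal_pos.mpr hb_pos).ne']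
          _ = ∫⁻ x, ENNReal.ofReal b * ENNReal.ofReal (hfun ((f x u).toReal)) ∂μ :=
              (lintegral_const_mul _ (show Measurable fun x => ENNReal.ofReal (hfun ((f x u).toReal)) from (measurable_hfun.comp ((hf_meas2 u).ennreal_toReal)).ennreal_ofReal)).symm
          _ = ∫⁻ x, ENNReal.ofReal (b * hfun ((f x u).toReal)) ∂μ :=
              lintegral_congr fun x => (ENNReal.ofReal_mul hb_pos.le).symm
          _ ≤ ∫⁻ x, (ENNReal.ofReal (hfun ((f x u).toReal * b))
              + ENNReal.ofReal (c * (f x u).toReal + |1 - b|)) ∂μ :=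
              lintegral_mono hptle
          _ = _ := lintegral_add_right _
              ((((hf_meas2 u).ennreal_toReal.const_mul c).add_const _).ennreal_ofReal)
      by_contra hLtop
      have hsum : ∫⁻ x, ENNReal.ofReal (hfun ((f x u).toReal * b)) ∂μ
          + ∫⁻ x, ENNReal.ofReal (c * (f x u).toReal + |1 - b|) ∂μ ≠ ⊤ :=
        ENNReal.add_ne_top.mpr ⟨hLtop, hfin2⟩
      exact hsum (top_le_iff.mp hlhs)
    · have hha_int : Integrable (fun x => hfun ((f x u).toReal)) μ := by
        have h := integrable_toReal_of_lintegral_ne_top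
          ((measurable_hfun.comp ((hf_meas2 u).ennreal_toReal)).ennreal_ofReal).aemeasurable hJ
        refine h.congr (Filter.Eventually.of_forall fun x => ?_)
        exact ENNReal.toReal_ofReal (hfun_nonneg ENNReal.toReal_nonneg)
      have ha_int : Integrable (fun x => (f x u).toReal) μ := by
        refine integrable_toReal_of_lintegral_ne_top (hf_meas2 u).aemeasurable ?_
        rw [hFu1]; exact one_ne_top
      have ha_mean : ∫ x, (f x u).toReal ∂μ = 1 := by
        rw [integral_toReal (hf_meas2 u).aemeasurable
          (by filter_upwards [hafin] with x hx using lt_top_iff_ne_top.mpr hx), hFu1]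
        simp
      have hid : ∀ x, hfun ((f x u).toReal * b)
          = b * hfun ((f x u).toReal) + (b * Real.log b) * (f x u).toReal + (1 - b) :=
        fun x => hfun_mul ENNReal.toReal_nonneg hb_pos.le
      have hint_ab : Integrable (fun x => hfun ((f x u).toReal * b)) μ := by
        have h2 : Integrable (fun x => b * hfun ((f x u).toReal)
            + (b * Real.log b) * (f x u).toReal + (1 - b)) μ :=
          ((hha_int.const_mul b).add (ha_int.const_mul _)).add (integrable_const _)
        exact h2.congr (Filter.Eventually.of_forall fun x => (hid x).symm)
      have hLHS : ∫⁻ x, ENNReal.ofReal (hfun ((f x u).toReal * b)) ∂μ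
          = ENNReal.ofReal (∫ x, hfun ((f x u).toReal * b) ∂μ) :=
        (ofReal_integral_eq_lintegral_ofReal hint_ab
          (Filter.Eventually.of_forall fun x =>
            hfun_nonneg (mul_nonneg ENNReal.toReal_nonneg hb_pos.le))).symm
      have hIval : ∫ x, hfun ((f x u).toReal * b) ∂μ
          = b * ∫ x, hfun ((f x u).toReal) ∂μ + hfun b := by
        calc ∫ x, hfun ((f x u).toReal * b) ∂μ
            = ∫ x, (b * hfun ((f x u).toReal)
              + (b * Real.log b) * (f x u).toReal + (1 - b)) ∂μ :=
              integral_congr_ae (Filter.Eventually.of_forall fun x => hid x)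
          _ = (∫ x, (b * hfun ((f x u).toReal)
              + (b * Real.log b) * (f x u).toReal) ∂μ) + (1 - b) := by
              have i12 : Integrable (fun x => b * hfun ((f x u).toReal)
                  + (b * Real.log b) * (f x u).toReal) μ :=
                (hha_int.const_mul b).add (ha_int.const_mul _)
              rw [integral_add i12 (integrable_const _), integral_const, probReal_univ]
              simp
          _ = b * ∫ x, hfun ((f x u).toReal) ∂μ
              + (b * Real.log b) * ∫ x, (f x u).toReal ∂μ + (1 - b) := by
              have i1 : Integrable (fun x => b * hfun ((f x u).toReal)) μ :=
                hha_int.const_mul b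
              have i2 : Integrable (fun x => (b * Real.log b) * (f x u).toReal) μ :=
                ha_int.const_mul _
              rw [integral_add i1 i2, integral_const_mul, integral_const_mul]
          _ = b * ∫ x, hfun ((f x u).toReal) ∂μ + hfun b := by
              rw [ha_mean]; simp [hfun]; ring
      have hJre : ∫⁻ x, ENNReal.ofReal (hfun ((f x u).toReal)) ∂μ
          = ENNReal.ofReal (∫ x, hfun ((f x u).toReal) ∂μ) :=
        (ofReal_integral_eq_lintegral_ofReal hha_int
          (Filter.Eventually.of_forall fun x => hfun_nonneg ENNReal.toReal_nonneg)).symm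
      rw [hLHS, hIval, ENNReal.ofReal_add
        (mul_nonneg hb_pos.le (integral_nonneg fun x => hfun_nonneg ENNReal.toReal_nonneg))
        (hfun_nonneg hb_pos.le),
        ENNReal.ofReal_mul hb_pos.le, ← hJre, hbdef, ENNReal.ofReal_toReal hgu]

/-- Decomposition of the expected KL cost: for the marginal `ρ* = μ.bind κ`,
`∫ D_KL(κ(x) ‖ ρ) dμ = ∫ D_KL(κ(x) ‖ ρ*) dμ + D_KL(ρ* ‖ ρ)`; in particular the marginal
minimizes the expected KL divergence over priors. -/
theorem expected_klDiv_decomposition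
    {X U : Type*} [MeasurableSpace X] [MeasurableSpace U] [StandardBorelSpace U]
    (μ : Measure X) [IsProbabilityMeasure μ]
    (κ : Kernel X U) [IsMarkovKernel κ]
    (ρ : Measure U) [IsProbabilityMeasure ρ] :
    (∫⁻ x, klDiv (κ x) ρ ∂μ =
        ∫⁻ x, klDiv (κ x) (μ.bind κ) ∂μ + klDiv (μ.bind κ) ρ) ∧
      ∀ ρ' : Measure U, IsProbabilityMeasure ρ' →
        ∫⁻ x, klDiv (κ x) (μ.bind κ) ∂μ ≤ ∫⁻ x, klDiv (κ x) ρ' ∂μ := by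
  refine ⟨klDiv_decomp_aux μ κ ρ, fun ρ' hρ' => ?_⟩
  rw [klDiv_decomp_aux μ κ ρ']
  exact le_self_add
end

section
/- Let Π be an n×n symmetric positive semi-definite real matrix, A an n×n matrix, B an n×m matrix, R an m×m symmetric positive definite matrix, Σ_ρ an m×m symmetric positive definite matrix, and ε > 0. Define S := R + Bᵀ Π B, M := S⁻¹ Bᵀ Π A, Γ := Aᵀ Π A − Aᵀ Π B S⁻¹ Bᵀ Π A, and Σ_Q := ε S⁻¹. Then Γ + ε Mᵀ (Σ_ρ + Σ_Q)⁻¹ M = Aᵀ Π A − Aᵀ Π B (S + ε Σ_ρ⁻¹)⁻¹ Bᵀ Π A. -/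
open Matrix

lemma posdef_smul' {m : ℕ} {X : Matrix (Fin m) (Fin m) ℝ} (hX : X.PosDef)
    {ε : ℝ} (hε : 0 < ε) : (ε • X).PosDef := by
  refine ⟨?_, fun x hx => ?_⟩
  · unfold Matrix.IsHermitian
    rw [conjTranspose_smul, hX.1]
    simp
  · convert mul_pos hε (hX.2 hx) using 1
    simp only [Finsupp.sum, Finset.mul_sum, Matrix.smul_apply, smul_eq_mul]
    exact Finset.sum_congr rfl fun _ _ => Finset.sum_congr rfl fun _ _ => by ring

/-- The quadratic coefficient of the value function after one backward dynamic-programming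
step with Gaussian prior covariance `Σ_ρ` equals the output of the modified Riccati map. -/
theorem value_function_riccati_step
    (n m : ℕ) (Pm : Matrix (Fin n) (Fin n) ℝ) (hPm : Pm.PosSemidef)
    (A : Matrix (Fin n) (Fin n) ℝ) (B : Matrix (Fin n) (Fin m) ℝ)
    (R Sρ : Matrix (Fin m) (Fin m) ℝ) (hR : R.PosDef) (hSρ : Sρ.PosDef)
    (ε : ℝ) (hε : 0 < ε)
    (S : Matrix (Fin m) (Fin m) ℝ) (hS : S = R + Bᵀ * Pm * B)
    (M : Matrix (Fin m) (Fin n) ℝ) (hM : M = S⁻¹ * Bᵀ * Pm * A)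
    (Γ : Matrix (Fin n) (Fin n) ℝ)
    (hΓ : Γ = Aᵀ * Pm * A - Aᵀ * Pm * B * S⁻¹ * Bᵀ * Pm * A)
    (SQ : Matrix (Fin m) (Fin m) ℝ) (hSQ : SQ = ε • S⁻¹) :
    Γ + ε • (Mᵀ * (Sρ + SQ)⁻¹ * M) =
      Aᵀ * Pm * A - Aᵀ * Pm * B * (S + ε • Sρ⁻¹)⁻¹ * Bᵀ * Pm * A := by
  -- basic positive-definiteness facts
  have hBPB : (Bᵀ * Pm * B).PosSemidef := by
    have := hPm.conjTranspose_mul_mul_same B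
    simpa using this
  have hSpd : S.PosDef := hS ▸ hR.add_posSemidef hBPB
  have hSidet : IsUnit S.det := (Matrix.isUnit_iff_isUnit_det _).1 hSpd.isUnit
  have hSρdet : IsUnit Sρ.det := (Matrix.isUnit_iff_isUnit_det _).1 hSρ.isUnit
  set C : Matrix (Fin m) (Fin m) ℝ := Sρ + ε • S⁻¹ with hC
  set D : Matrix (Fin m) (Fin m) ℝ := S + ε • Sρ⁻¹ with hD
  have hCpd : C.PosDef := hSρ.add_posSemidef (posdef_smul' hSpd.inv hε).posSemidef
  have hCdet : IsUnit C.det := (Matrix.isUnit_iff_isUnit_det _).1 hCpd.isUnit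
  -- symmetry of Pm and S⁻¹
  have hPmT : Pmᵀ = Pm := by
    have := hPm.1; simpa using this.eq
  have hST : Sᵀ = S := by
    have := hSpd.1; simpa using this.eq
  have hSiT : S⁻¹ᵀ = S⁻¹ := by rw [Matrix.transpose_nonsing_inv, hST]
  -- D = Sρ⁻¹ * C * S
  have hDfac : D = Sρ⁻¹ * C * S := by
    rw [hC, hD, Matrix.mul_add, Matrix.add_mul, Matrix.nonsing_inv_mul Sρ hSρdet,
      Matrix.one_mul, Matrix.mul_smul, Matrix.smul_mul, Matrix.mul_assoc,
      Matrix.nonsing_inv_mul S hSidet, Matrix.mul_one, add_comm]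
  have hDinv : D⁻¹ = S⁻¹ * C⁻¹ * Sρ := by
    rw [hDfac, Matrix.mul_inv_rev, Matrix.mul_inv_rev,
      Matrix.nonsing_inv_nonsing_inv Sρ hSρdet, ← Matrix.mul_assoc]
  -- key identity
  have key : ε • (S⁻¹ * C⁻¹ * S⁻¹) = S⁻¹ - D⁻¹ := by
    have h1 : S⁻¹ * C⁻¹ * (C - Sρ) = S⁻¹ - S⁻¹ * C⁻¹ * Sρ := by
      rw [Matrix.mul_sub, Matrix.mul_assoc, Matrix.nonsing_inv_mul C hCdet, Matrix.mul_one]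
    have h2 : C - Sρ = ε • S⁻¹ := by rw [hC]; abel
    rw [hDinv, ← h1, h2, Matrix.mul_smul]
  -- transpose of M
  have hMT : Mᵀ = Aᵀ * Pm * B * S⁻¹ := by
    rw [hM, Matrix.transpose_mul, Matrix.transpose_mul, Matrix.transpose_mul,
      hPmT, hSiT, transpose_transpose]
    simp only [Matrix.mul_assoc]
  rw [hSQ, hΓ, hMT, hM]
  have expand : ε • (Aᵀ * Pm * B * S⁻¹ * C⁻¹ * (S⁻¹ * Bᵀ * Pm * A))
      = Aᵀ * Pm * B * (ε • (S⁻¹ * C⁻¹ * S⁻¹)) * (Bᵀ * Pm * A) := by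
    rw [Matrix.mul_smul, Matrix.smul_mul]
    congr 1
    simp only [Matrix.mul_assoc]
  rw [← hC, expand, key]
  simp only [Matrix.mul_sub, Matrix.sub_mul, Matrix.mul_assoc]
  abel
end
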